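/- Let w be analytic on the open unit disk D with w(D) ⊆ D and w(0) = 0. Then the majorant series of its derivative satisfies M_{w'}(r) ≤ 1 for all 0 ≤ r ≤ 1 − √(2/3). -/

import Mathlib

open Metric

/-- The majorant series `M_F(r) = ∑ |A_n| r^n` of an analytic function
`F(z) = ∑ A_n z^n` on the unit disk, where `A_n = F⁽ⁿ⁾(0)/n!`. -/
noncomputable def majorant (F : ℂ → ℂ) (r : ℝ) : ℝ :=
  ∑' n : ℕ, ‖iteratedDeriv n F 0 / n.factorial‖ * r ^ n

/-- `g` is subordinate to `f` on the unit disk: `g = f ∘ φ` for some analytic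
self-map `φ` of the unit disk with `φ 0 = 0`. -/
def Subordinate (g f : ℂ → ℂ) : Prop :=
  ∃ φ : ℂ → ℂ, AnalyticOnNhd ℂ φ (ball 0 1) ∧ φ 0 = 0 ∧
    Set.MapsTo φ (ball 0 1) (ball 0 1) ∧ Set.EqOn g (f ∘ φ) (ball 0 1)

open Complex Filter
open scoped ENNReal NNReal

lemma rep_of_diff {f : ℂ → ℂ} (hf : DifferentiableOn ℂ f (ball 0 1))
    {z : ℂ} (hz : z ∈ ball (0:ℂ) 1) :
    HasSum (fun k => (iteratedDeriv k f 0 / k.factorial) * z ^ k) (f z) := by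
  have hz1 : ‖z‖ < 1 := mem_ball_zero_iff.1 hz
  set ρ : NNReal := ⟨(‖z‖ + 1) / 2, by positivity⟩ with hρ
  have hρ1 : (ρ : ℝ) < 1 := by
    show (‖z‖ + 1) / 2 < 1; linarith
  have hρz : ‖z‖ < (ρ : ℝ) := by
    show ‖z‖ < (‖z‖ + 1) / 2; linarith [norm_nonneg z]
  have hρ0 : 0 < ρ := by
    rw [← NNReal.coe_lt_coe]; simp only [hρ, NNReal.coe_mk, NNReal.coe_zero]
    show (0:ℝ) < (‖z‖ + 1) / 2; positivity
  have hd : DifferentiableOn ℂ f (closedBall 0 ρ) :=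
    hf.mono (closedBall_subset_ball hρ1)
  have H := hd.hasFPowerSeriesOnBall hρ0
  have hcoeff : ∀ k : ℕ, (cauchyPowerSeries f 0 ρ).coeff k
      = iteratedDeriv k f 0 / k.factorial := by
    intro k
    have h1 := H.factorial_smul (y := (1:ℂ)) k
    rw [← iteratedDeriv_eq_iteratedFDeriv] at h1
    have h2 : (k.factorial : ℂ) * (cauchyPowerSeries f 0 ρ).coeff k = iteratedDeriv k f 0 := by
      rw [← h1, nsmul_eq_mul]; rfl
    rw [← h2, mul_comm, mul_div_assoc, div_self (by exact_mod_cast k.factorial_ne_zero), mul_one]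
  have hmem : z ∈ Metric.eball (0:ℂ) ρ := by
    rw [Metric.emetric_ball_nnreal]
    exact mem_ball_zero_iff.2 hρz
  have := H.hasSum hmem
  simp only [zero_add] at this
  have heq : (fun k => (iteratedDeriv k f 0 / k.factorial) * z ^ k)
      = fun n => (cauchyPowerSeries f 0 ρ) n fun _ => z := by
    funext k
    rw [FormalMultilinearSeries.apply_eq_pow_smul_coeff, hcoeff, smul_eq_mul, mul_comm]
  rw [heq]; exact this

lemma ofScalars_coeff (c : ℕ → ℂ) (n : ℕ) :
    (FormalMultilinearSeries.ofScalars ℂ c).coeff n = c n := by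
  simp [FormalMultilinearSeries.coeff, FormalMultilinearSeries.ofScalars, List.prod_ofFn]

lemma hasFPS_of_rep {f : ℂ → ℂ} {b : ℕ → ℂ}
    (hrep : ∀ z ∈ ball (0:ℂ) 1, HasSum (fun k => b k * z ^ k) (f z)) :
    HasFPowerSeriesOnBall f (FormalMultilinearSeries.ofScalars ℂ b) 0 1 := by
  constructor
  · refine ENNReal.le_of_forall_nnreal_lt fun r hr => ?_
    apply FormalMultilinearSeries.le_radius_of_tendsto (l := 0)
    have hr1 : ((r:ℝ):ℂ) ∈ ball (0:ℂ) 1 := by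
      rw [mem_ball_zero_iff]
      simpa using (by exact_mod_cast hr : (r:ℝ) < 1)
    have h := ((hrep _ hr1).summable.tendsto_atTop_zero).norm
    rw [norm_zero] at h
    convert h using 2 with n
    rw [FormalMultilinearSeries.norm_apply_eq_norm_coef, ofScalars_coeff,
      norm_mul, norm_pow]
    norm_num
  · exact one_pos
  · intro y hy
    rw [mem_emetric_ball_zero_iff] at hy
    have hy' : y ∈ ball (0:ℂ) 1 := by
      rw [mem_ball_zero_iff]
      have hy2 : (‖y‖₊ : ℝ≥0∞) < 1 := by simpa [enorm_eq_nnnorm] using hy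
      exact_mod_cast ENNReal.coe_lt_one_iff.1 hy2
    have := hrep y hy'
    rw [zero_add]
    have e : (fun n => (FormalMultilinearSeries.ofScalars ℂ b) n (fun _ => y))
        = fun k => b k * y ^ k := by
      funext n
      rw [FormalMultilinearSeries.apply_eq_pow_smul_coeff, ofScalars_coeff, smul_eq_mul, mul_comm]
    rw [e]; exact this

lemma coeff_norm_le_one {f : ℂ → ℂ} {b : ℕ → ℂ}
    (hrep : ∀ z ∈ ball (0:ℂ) 1, HasSum (fun k => b k * z ^ k) (f z))
    (hb : ∀ z ∈ ball (0:ℂ) 1, ‖f z‖ ≤ 1) (n : ℕ) : ‖b n‖ ≤ 1 := by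
  have hfp := hasFPS_of_rep hrep
  have hdiff : DifferentiableOn ℂ f (ball 0 1) := by
    have h := hfp.differentiableOn
    have e1 : (1:ℝ≥0∞) = ((1:NNReal):ℝ≥0∞) := by norm_num
    rwa [e1, Metric.emetric_ball_nnreal] at h
  have key : ∀ ρ : ℝ, 0 < ρ → ρ < 1 → ‖b n‖ * ρ ^ n ≤ 1 := by
    intro ρ h0 h1
    set ρ' : NNReal := ⟨ρ, h0.le⟩ with hρ'
    have hρc : ((ρ':ℝ)) = ρ := rfl
    have hmem : ∀ θ : ℝ, circleMap 0 ρ θ ∈ ball (0:ℂ) 1 := by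
      intro θ
      rw [mem_ball_zero_iff]
      simpa [abs_of_pos h0] using h1
    have hd : DifferentiableOn ℂ f (closedBall 0 ρ') :=
      hdiff.mono (closedBall_subset_ball (by rw [hρc]; exact h1))
    have H := hd.hasFPowerSeriesOnBall (by rw [← NNReal.coe_pos, hρc]; exact h0)
    have hpq : FormalMultilinearSeries.ofScalars ℂ b = cauchyPowerSeries f 0 ρ' :=
      hfp.hasFPowerSeriesAt.eq_formalMultilinearSeries H.hasFPowerSeriesAt
    have hc : Continuous (fun θ : ℝ => ‖f (circleMap 0 ρ θ)‖) := by
      apply Continuous.norm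
      exact hdiff.continuousOn.comp_continuous (continuous_circleMap 0 ρ) hmem
    have hint : (∫ θ : ℝ in (0)..2 * Real.pi, ‖f (circleMap 0 ρ θ)‖)
        ≤ 2 * Real.pi := by
      have h2 : IntervalIntegrable (fun _ : ℝ => (1:ℝ)) MeasureTheory.volume 0 (2 * Real.pi) :=
        intervalIntegrable_const
      have := intervalIntegral.integral_mono_on Real.two_pi_pos.le
        (hc.intervalIntegrable 0 (2 * Real.pi)) h2
        (fun θ _ => hb _ (hmem θ))
      simpa using this
    have hbound := norm_cauchyPowerSeries_le f 0 ρ' n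
    have hb' : ‖b n‖ ≤ ρ⁻¹ ^ n := by
      calc ‖b n‖ = ‖(FormalMultilinearSeries.ofScalars ℂ b).coeff n‖ := by
            rw [ofScalars_coeff]
        _ = ‖cauchyPowerSeries f 0 ρ' n‖ := by
            rw [← FormalMultilinearSeries.norm_apply_eq_norm_coef, hpq]
        _ ≤ ((2 * Real.pi)⁻¹ * ∫ θ : ℝ in (0)..2 * Real.pi,
              ‖f (circleMap 0 ρ' θ)‖) * |(ρ':ℝ)|⁻¹ ^ n := hbound
        _ ≤ ((2 * Real.pi)⁻¹ * (2 * Real.pi)) * ρ⁻¹ ^ n := by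
            rw [hρc, abs_of_pos h0]
            apply mul_le_mul_of_nonneg_right _ (by positivity)
            exact mul_le_mul_of_nonneg_left hint (by positivity)
        _ = ρ⁻¹ ^ n := by
            rw [inv_mul_cancel₀ Real.two_pi_pos.ne', one_mul]
    calc ‖b n‖ * ρ ^ n ≤ ρ⁻¹ ^ n * ρ ^ n :=
          mul_le_mul_of_nonneg_right hb' (by positivity)
      _ = 1 := by rw [← mul_pow, inv_mul_cancel₀ h0.ne', one_pow]
  have hlim : Tendsto (fun ρ : ℝ => ‖b n‖ * ρ ^ n) (nhdsWithin 1 (Set.Iio 1))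
      (nhds (‖b n‖ * 1 ^ n)) :=
    ((continuous_const.mul (continuous_pow n)).tendsto 1).mono_left nhdsWithin_le_nhds
  rw [one_pow, mul_one] at hlim
  refine le_of_tendsto hlim ?_
  filter_upwards [Ioo_mem_nhdsLT_of_mem (Set.mem_Ioc.2 ⟨zero_lt_one, le_rfl⟩)] with ρ hρ
  exact key ρ hρ.1 hρ.2

lemma pick_deriv_zero {K : ℂ → ℂ} (hd : DifferentiableOn ℂ K (ball 0 1))
    (hb : ∀ z ∈ ball (0:ℂ) 1, ‖K z‖ ≤ 1) :
    ‖deriv K 0‖ ≤ 1 - ‖K 0‖ ^ 2 := by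
  have h01 : (0:ℂ) ∈ ball (0:ℂ) 1 := mem_ball_self one_pos
  by_cases hc : ‖K 0‖ = 1
  · have hmax : IsMaxOn (norm ∘ K) (ball 0 1) 0 := fun z hz => by
      simp only [Function.comp_apply, Set.mem_setOf_eq, hc]
      exact hb z hz
    have heq := Complex.eqOn_of_isPreconnected_of_isMaxOn_norm
      (convex_ball (0:ℂ) 1).isPreconnected isOpen_ball hd h01 hmax
    have hder : deriv K 0 = 0 := by
      have hev : K =ᶠ[nhds 0] Function.const ℂ (K 0) :=
        Filter.eventuallyEq_of_mem (isOpen_ball.mem_nhds h01) heq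
      rw [hev.deriv_eq]; exact deriv_const 0 (K 0)
    rw [hder, norm_zero, hc]; norm_num
  · have hclt : ‖K 0‖ < 1 := lt_of_le_of_ne (hb 0 h01) hc
    set c := K 0 with hcdef
    have hnsq : normSq c < 1 := by
      rw [← Complex.sq_norm]
      nlinarith [norm_nonneg c, hclt]
    set G : ℂ → ℂ := fun z => (K z - c) / (1 - (starRingEnd ℂ) c * K z) with hG
    have hden : ∀ z ∈ ball (0:ℂ) 1, 1 - (starRingEnd ℂ) c * K z ≠ 0 := by
      intro z hz h
      have hlt : ‖(starRingEnd ℂ) c * K z‖ < 1 := by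
        rw [norm_mul, Complex.norm_conj]
        calc ‖c‖ * ‖K z‖ ≤ ‖c‖ * 1 := by
              exact mul_le_mul_of_nonneg_left (hb z hz) (norm_nonneg c)
          _ < 1 := by rw [mul_one]; exact hclt
      rw [sub_eq_zero] at h
      rw [← h] at hlt
      simp at hlt
    have hGd : DifferentiableOn ℂ G (ball 0 1) := by
      apply DifferentiableOn.div (hd.sub_const c)
      · exact (differentiableOn_const _).sub ((differentiableOn_const _).mul hd)
      · exact hden
    have hGb : ∀ z ∈ ball (0:ℂ) 1, ‖G z‖ ≤ 1 := by
      intro z hz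
      have hKz : ‖K z‖ ≤ 1 := hb z hz
      have hKsq : normSq (K z) ≤ 1 := by
        rw [← Complex.sq_norm]
        nlinarith [norm_nonneg (K z), hKz]
      have key : normSq (1 - (starRingEnd ℂ) c * K z) - normSq (K z - c)
          = (1 - normSq c) * (1 - normSq (K z)) := by
        simp only [Complex.normSq_apply, Complex.sub_re, Complex.sub_im, Complex.mul_re,
          Complex.mul_im, Complex.one_re, Complex.one_im, Complex.conj_re, Complex.conj_im]
        ring
      have hle : ‖K z - c‖ ≤ ‖1 - (starRingEnd ℂ) c * K z‖ := by
        rw [Complex.norm_def, Complex.norm_def]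
        apply Real.sqrt_le_sqrt
        nlinarith [key, hnsq.le, hKsq]
      rw [hG]
      simp only [norm_div]
      exact div_le_one_of_le₀ hle (norm_nonneg _)
    have hG0 : G 0 = 0 := by
      rw [hG]; simp [← hcdef]
    have hG1 : ‖deriv G 0‖ ≤ 1 := by
      have hS : ∀ R₂ : ℝ, 1 < R₂ → ‖deriv G 0‖ ≤ R₂ := by
        intro R₂ hR₂
        have hmaps : Set.MapsTo G (ball 0 1) (ball (G 0) R₂) := by
          intro z hz
          rw [hG0, mem_ball_zero_iff]
          exact lt_of_le_of_lt (hGb z hz) hR₂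
        simpa using Complex.norm_deriv_le_div_of_mapsTo_ball hGd (hmaps.mono_right ball_subset_closedBall) one_pos
      by_contra h
      push_neg at h
      have := hS ((1 + ‖deriv G 0‖) / 2) (by linarith)
      linarith
    -- compute deriv G 0
    have hKd : HasDerivAt K (deriv K 0) 0 :=
      (hd.differentiableAt (isOpen_ball.mem_nhds h01)).hasDerivAt
    have hnum : HasDerivAt (fun z => K z - c) (deriv K 0) 0 := hKd.sub_const c
    have hden' : HasDerivAt (fun z => 1 - (starRingEnd ℂ) c * K z)
        (-((starRingEnd ℂ) c * deriv K 0)) 0 :=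
      (hKd.const_mul ((starRingEnd ℂ) c)).const_sub 1
    have hGder : HasDerivAt G
        ((deriv K 0 * (1 - (starRingEnd ℂ) c * K 0) - (K 0 - c) * (-((starRingEnd ℂ) c * deriv K 0)))
          / (1 - (starRingEnd ℂ) c * K 0) ^ 2) 0 := hnum.div hden' (hden 0 h01)
    have hu : (1 : ℂ) - (starRingEnd ℂ) c * K 0 = ((1 - normSq c : ℝ) : ℂ) := by
      rw [← hcdef, mul_comm, Complex.mul_conj]
      push_cast
      ring
    have hu0 : (1 : ℂ) - (starRingEnd ℂ) c * K 0 ≠ 0 := hden 0 h01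
    have hder : deriv G 0 = deriv K 0 / (1 - (starRingEnd ℂ) c * K 0) := by
      rw [hGder.deriv, ← hcdef]
      have hu0' : (1:ℂ) - (starRingEnd ℂ) c * c ≠ 0 := hu0
      field_simp
      ring
    have hfin : deriv K 0 = deriv G 0 * ((1 - normSq c : ℝ) : ℂ) := by
      rw [hder, ← hu]
      field_simp
    calc ‖deriv K 0‖ = ‖deriv G 0‖ * ‖((1 - normSq c : ℝ) : ℂ)‖ := by rw [hfin, norm_mul]
      _ ≤ 1 * (1 - normSq c) := by
          apply mul_le_mul hG1 _ (norm_nonneg _) zero_le_one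
          rw [Complex.norm_real, Real.norm_eq_abs, _root_.abs_of_nonneg (by linarith)]
      _ = 1 - ‖K 0‖ ^ 2 := by
          rw [one_mul, ← hcdef, Complex.sq_norm]

lemma schur_coeff {φ : ℂ → ℂ} {b : ℕ → ℂ}
    (hrep : ∀ z ∈ ball (0:ℂ) 1, HasSum (fun k => b k * z ^ k) (φ z))
    (hb : ∀ z ∈ ball (0:ℂ) 1, ‖φ z‖ ≤ 1) {n : ℕ} (hn : 1 ≤ n) :
    ‖b n‖ ≤ 1 - ‖b 0‖ ^ 2 := by
  have hnne : n ≠ 0 := Nat.one_le_iff_ne_zero.1 hn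
  have hnpos : 0 < n := hn
  have hcb : ∀ k, ‖b k‖ ≤ 1 := coeff_norm_le_one hrep hb
  -- the symmetrized function H
  set H : ℂ → ℂ := fun z => ∑' m : ℕ, b (n * m) * z ^ m with hHdef
  have hHrep : ∀ z ∈ ball (0:ℂ) 1, HasSum (fun m => b (n * m) * z ^ m) (H z) := by
    intro z hz
    rw [mem_ball_zero_iff] at hz
    have hsummable : Summable (fun m => b (n * m) * z ^ m) := by
      apply Summable.of_norm
      apply Summable.of_nonneg_of_le (fun m => norm_nonneg _) (fun m => ?_)
        (summable_geometric_of_lt_one (norm_nonneg z) hz)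
      calc ‖b (n * m) * z ^ m‖ = ‖b (n * m)‖ * ‖z‖ ^ m := by rw [norm_mul, norm_pow]
        _ ≤ 1 * ‖z‖ ^ m := mul_le_mul_of_nonneg_right (hcb _) (by positivity)
        _ = ‖z‖ ^ m := one_mul _
    exact hsummable.hasSum
  have hfpH := hasFPS_of_rep hHrep
  have hHd : DifferentiableOn ℂ H (ball 0 1) := by
    have h := hfpH.differentiableOn
    have e1 : (1:ℝ≥0∞) = ((1:NNReal):ℝ≥0∞) := by norm_num
    rwa [e1, Metric.emetric_ball_nnreal] at h
  -- the root of unity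
  set ω : ℂ := Complex.exp (2 * Real.pi * Complex.I / n) with hω
  have hprim : IsPrimitiveRoot ω n := Complex.isPrimitiveRoot_exp n hnne
  have hωn : ω ^ n = 1 := hprim.pow_eq_one
  have hωabs : ‖ω‖ = 1 := by
    have harg : (2 * (Real.pi:ℂ) * Complex.I / n) = ((2 * Real.pi / n : ℝ) : ℂ) * Complex.I := by
      push_cast; ring
    rw [hω, harg, Complex.norm_exp_ofReal_mul_I]
  -- sup bound for H
  have hHb : ∀ z ∈ ball (0:ℂ) 1, ‖H z‖ ≤ 1 := by
    intro z hz
    obtain ⟨y, hy⟩ := IsAlgClosed.exists_pow_nat_eq z hnpos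
    have hy1 : ‖y‖ < 1 := by
      by_contra h
      push_neg at h
      have h2 : (1:ℝ) ≤ ‖y‖ ^ n := one_le_pow₀ h
      rw [← norm_pow, hy] at h2
      rw [mem_ball_zero_iff] at hz
      linarith
    have hite : ∀ k : ℕ, (∑ j ∈ Finset.range n, (ω ^ k) ^ j) = if n ∣ k then (n:ℂ) else 0 := by
      intro k
      by_cases hdvd : n ∣ k
      · rw [if_pos hdvd]
        have h1 : ω ^ k = 1 := (hprim.pow_eq_one_iff_dvd k).2 hdvd
        simp [h1]
      · rw [if_neg hdvd]
        have hne : ω ^ k ≠ 1 := fun h => hdvd ((hprim.pow_eq_one_iff_dvd k).1 h)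
        rw [geom_sum_eq hne]
        have h2 : (ω ^ k) ^ n = 1 := by
          rw [← pow_mul, mul_comm, pow_mul, hωn, one_pow]
        rw [h2, sub_self, zero_div]
    have hsum1 : HasSum (fun k => ∑ j ∈ Finset.range n, (ω ^ k) ^ j * (b k * y ^ k))
        (∑ j ∈ Finset.range n, φ (ω ^ j * y)) := by
      refine hasSum_sum (f := fun (j : ℕ) (k : ℕ) => (ω ^ k) ^ j * (b k * y ^ k)) ?_
      intro j _
      have hmem : ω ^ j * y ∈ ball (0:ℂ) 1 := by
        rw [mem_ball_zero_iff, norm_mul, norm_pow, hωabs, one_pow, one_mul]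
        exact hy1
      have h3 := hrep _ hmem
      have heq : (fun k => (ω ^ k) ^ j * (b k * y ^ k)) = fun k => b k * (ω ^ j * y) ^ k := by
        funext k
        rw [mul_pow, ← pow_right_comm]
        ring
      show HasSum (fun k => (ω ^ k) ^ j * (b k * y ^ k)) (φ (ω ^ j * y))
      rw [heq]
      exact h3
    have hsum2 : HasSum (fun k => if n ∣ k then (n:ℂ) * (b k * y ^ k) else 0)
        (∑ j ∈ Finset.range n, φ (ω ^ j * y)) := by
      have heq : (fun k => if n ∣ k then (n:ℂ) * (b k * y ^ k) else 0)
          = fun k => ∑ j ∈ Finset.range n, (ω ^ k) ^ j * (b k * y ^ k) := by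
        funext k
        rw [← Finset.sum_mul, hite k, ite_mul, zero_mul]
      rw [heq]
      exact hsum1
    have hinj : Function.Injective (fun m : ℕ => n * m) := fun a c h =>
      Nat.eq_of_mul_eq_mul_left hnpos h
    have hsupp : ∀ k ∉ Set.range (fun m : ℕ => n * m),
        (if n ∣ k then (n:ℂ) * (b k * y ^ k) else 0) = 0 := by
      intro k hk
      rw [if_neg]
      intro ⟨m, hm⟩
      exact hk ⟨m, hm.symm⟩
    have hsum3 : HasSum (fun m : ℕ => (n:ℂ) * (b (n * m) * y ^ (n * m)))
        (∑ j ∈ Finset.range n, φ (ω ^ j * y)) := by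
      have h4 := (hinj.hasSum_iff hsupp).2 hsum2
      have heq : ((fun k => if n ∣ k then (n:ℂ) * (b k * y ^ k) else 0) ∘ (fun m : ℕ => n * m))
          = fun m : ℕ => (n:ℂ) * (b (n * m) * y ^ (n * m)) := by
        funext m
        simp only [Function.comp_apply]
        rw [if_pos ⟨m, rfl⟩]
      rwa [heq] at h4
    have hsum4 : HasSum (fun m : ℕ => (n:ℂ) * (b (n * m) * z ^ m)) ((n:ℂ) * H z) :=
      (hHrep z hz).mul_left _
    have heq2 : (fun m : ℕ => (n:ℂ) * (b (n * m) * z ^ m))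
        = fun m : ℕ => (n:ℂ) * (b (n * m) * y ^ (n * m)) := by
      funext m
      rw [← hy, pow_mul]
    rw [heq2] at hsum4
    have hkey : (n:ℂ) * H z = ∑ j ∈ Finset.range n, φ (ω ^ j * y) :=
      hsum4.unique hsum3
    have hnorm : (n:ℝ) * ‖H z‖ ≤ (n:ℝ) * 1 := by
      have h5 : ‖(n:ℂ) * H z‖ ≤ (n:ℝ) := by
        rw [hkey]
        calc ‖∑ j ∈ Finset.range n, φ (ω ^ j * y)‖
            ≤ ∑ j ∈ Finset.range n, ‖φ (ω ^ j * y)‖ := norm_sum_le _ _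
          _ ≤ ∑ j ∈ Finset.range n, (1:ℝ) := by
              apply Finset.sum_le_sum
              intro j _
              apply hb
              rw [mem_ball_zero_iff, norm_mul, norm_pow, hωabs, one_pow, one_mul]
              exact hy1
          _ = n := by simp
      rw [norm_mul, Complex.norm_natCast] at h5
      rw [mul_one]
      exact h5
    have := mul_le_mul_iff_right₀ (by exact_mod_cast hnpos : (0:ℝ) < n) |>.1 hnorm
    linarith [this]
  -- apply the Pick lemma
  have hpick := pick_deriv_zero hHd hHb
  have hH0 : H 0 = b 0 := by
    have h6 := hfpH.coeff_zero (fun _ => 1)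
    rw [show (FormalMultilinearSeries.ofScalars ℂ (fun m => b (n * m))) 0 (fun _ => 1)
        = b (n * 0) from FormalMultilinearSeries.apply_eq_pow_smul_coeff.trans
          (by rw [ofScalars_coeff]; simp)] at h6
    rw [← h6, mul_zero]
  have hd1 : deriv H 0 = b n := by
    have h7 := hfpH.hasFPowerSeriesAt.deriv
    rw [show (FormalMultilinearSeries.ofScalars ℂ (fun m => b (n * m))) 1 (fun _ => 1)
        = b (n * 1) from FormalMultilinearSeries.apply_eq_pow_smul_coeff.trans
          (by rw [ofScalars_coeff]; simp)] at h7
    rw [h7, mul_one]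
  rw [hd1, hH0] at hpick
  exact hpick

/-- Bohr inequality for the derivative of an analytic self-map of the unit
disk fixing the origin: `M_{w'}(r) ≤ 1` for `0 ≤ r ≤ 1 - √(2/3)`. -/
theorem bohr_deriv_selfmap_fixing_origin (w : ℂ → ℂ)
    (hw : AnalyticOnNhd ℂ w (ball 0 1))
    (hmap : Set.MapsTo w (ball 0 1) (ball 0 1))
    (h0 : w 0 = 0) :
    ∀ r : ℝ, 0 ≤ r → r ≤ 1 - Real.sqrt (2 / 3) →
      majorant (deriv w) r ≤ 1 := by
  intro r hr0 hrle
  have hsq : Real.sqrt (2/3) ≤ 1 - r := by linarith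
  have hsqrtpos : 0 < Real.sqrt (2/3) := Real.sqrt_pos.2 (by norm_num)
  have hrlt1 : r < 1 := by linarith
  set a : ℕ → ℂ := fun k => iteratedDeriv k w 0 / k.factorial with ha
  have hwd : DifferentiableOn ℂ w (ball 0 1) := hw.differentiableOn
  have hrepw : ∀ z ∈ ball (0:ℂ) 1, HasSum (fun k => a k * z ^ k) (w z) :=
    fun z hz => rep_of_diff hwd hz
  have ha0 : a 0 = 0 := by simp [ha, h0]
  have ha1 : a 1 = deriv w 0 := by simp [ha, iteratedDeriv_one]
  set φ : ℂ → ℂ := dslope w 0 with hφ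
  have hφb : ∀ z ∈ ball (0:ℂ) 1, ‖φ z‖ ≤ 1 := by
    intro z hz
    have hmaps : Set.MapsTo w (ball 0 1) (ball (w 0) 1) := by rwa [h0]
    have := Complex.norm_dslope_le_div_of_mapsTo_ball hwd (hmaps.mono_right ball_subset_closedBall) hz
    simpa using this
  set b : ℕ → ℂ := fun k => a (k + 1) with hbdef
  have hrepφ : ∀ z ∈ ball (0:ℂ) 1, HasSum (fun k => b k * z ^ k) (φ z) := by
    intro z hz
    by_cases hz0 : z = 0
    · subst hz0
      have h1 : HasSum (fun k : ℕ => b k * (0:ℂ) ^ k) (b 0 * (0:ℂ) ^ 0) :=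
        hasSum_single 0 (fun k hk => by rw [zero_pow hk, mul_zero])
      simpa [hφ, dslope_same, hbdef, ha1] using h1
    · have h1 := hrepw z hz
      have h2 : HasSum (fun n : ℕ => a (n + 1) * z ^ (n + 1)) (w z) := by
        refine (hasSum_nat_add_iff (f := fun k => a k * z ^ k) 1).2 ?_
        simpa [ha0] using h1
      have h3 : HasSum (fun n : ℕ => z * (b n * z ^ n)) (w z) := by
        have heq : (fun n : ℕ => z * (b n * z ^ n)) = fun n => a (n+1) * z ^ (n+1) := by
          funext n; rw [hbdef, pow_succ]; ring
        rw [heq]; exact h2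
      have h4 := h3.mul_left z⁻¹
      have heq2 : (fun n : ℕ => z⁻¹ * (z * (b n * z ^ n))) = fun n => b n * z ^ n := by
        funext n
        rw [← mul_assoc, inv_mul_cancel₀ hz0, one_mul]
      rw [heq2] at h4
      have hφz : φ z = z⁻¹ * w z := by
        rw [hφ, dslope_of_ne _ hz0, slope_def_field, h0]
        rw [sub_zero, sub_zero, div_eq_inv_mul]
      rwa [hφz]
  have hcb : ∀ n : ℕ, ‖a (n+1)‖ ≤ 1 := fun n => by
    simpa [hbdef] using coeff_norm_le_one hrepφ hφb n
  set t := ‖a 1‖ with ht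
  have ht0 : 0 ≤ t := norm_nonneg _
  have ht1 : t ≤ 1 := by simpa using hcb 0
  have hschur : ∀ n : ℕ, 1 ≤ n → ‖a (n+1)‖ ≤ 1 - t^2 := by
    intro n hn
    have := schur_coeff hrepφ hφb hn
    simpa [hbdef, ht] using this
  -- series rewriting
  have hterm : ∀ n : ℕ, ‖iteratedDeriv n (deriv w) 0 / (n.factorial : ℂ)‖ * r ^ n
      = (((n:ℝ) + 1) * ‖a (n + 1)‖) * r ^ n := by
    intro n
    congr 1
    rw [← iteratedDeriv_succ']
    have h6 : iteratedDeriv (n+1) w 0 / (n.factorial : ℂ) = ((n:ℂ) + 1) * a (n+1) := by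
      rw [ha]
      simp only
      rw [Nat.factorial_succ]
      have hne1 : ((n.factorial : ℂ)) ≠ 0 := by exact_mod_cast n.factorial_ne_zero
      have hne2 : ((n:ℂ) + 1) ≠ 0 := Nat.cast_add_one_ne_zero n
      push_cast
      field_simp
    rw [h6, norm_mul]
    congr 1
    rw [show ((n:ℂ) + 1) = (((n+1 : ℕ)) : ℂ) by push_cast; ring, Complex.norm_natCast]
    push_cast; ring
  have hnorm_r : ‖r‖ < 1 := by rwa [Real.norm_eq_abs, _root_.abs_of_nonneg hr0]
  have hsum_n : Summable (fun n : ℕ => (n:ℝ) * r ^ n) := by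
    have := summable_pow_mul_geometric_of_norm_lt_one 1 hnorm_r
    simpa using this
  have hsum_geo : Summable (fun n : ℕ => r ^ n) := summable_geometric_of_lt_one hr0 hrlt1
  have hgeo : Summable (fun n : ℕ => ((n:ℝ) + 1) * r ^ n) := by
    have := hsum_n.add hsum_geo
    have heq : (fun n : ℕ => ((n:ℝ) + 1) * r ^ n)
        = fun n : ℕ => (n:ℝ) * r ^ n + r ^ n := by
      funext n; ring
    rwa [heq]
  have hC : ∑' n : ℕ, ((n:ℝ) + 1) * r ^ n = ((1 - r)^2)⁻¹ := by
    have h1 : ∑' n : ℕ, (n:ℝ) * r ^ n = r / (1 - r)^2 :=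
      tsum_coe_mul_geometric_of_norm_lt_one hnorm_r
    have h2 : ∑' n : ℕ, r ^ n = (1 - r)⁻¹ := tsum_geometric_of_lt_one hr0 hrlt1
    have h3 : ∑' n : ℕ, ((n:ℝ) + 1) * r ^ n
        = (∑' n : ℕ, (n:ℝ) * r ^ n) + ∑' n : ℕ, r ^ n := by
      rw [← Summable.tsum_add hsum_n hsum_geo]
      congr 1; funext n; ring
    have hne : (1:ℝ) - r ≠ 0 := by linarith
    rw [h3, h1, h2]
    field_simp
    ring
  -- the majorant series
  set f : ℕ → ℝ := fun n => (((n:ℝ) + 1) * ‖a (n + 1)‖) * r ^ n with hf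
  have hmaj : majorant (deriv w) r = ∑' n, f n := by
    unfold majorant
    exact tsum_congr hterm
  have hfle : ∀ n : ℕ, f n ≤ ((n:ℝ) + 1) * r ^ n := by
    intro n
    rw [hf]
    simp only
    have : (((n:ℝ) + 1) * ‖a (n + 1)‖) ≤ ((n:ℝ) + 1) * 1 :=
      mul_le_mul_of_nonneg_left (hcb n) (by positivity)
    calc (((n:ℝ) + 1) * ‖a (n + 1)‖) * r ^ n ≤ (((n:ℝ) + 1) * 1) * r ^ n :=
          mul_le_mul_of_nonneg_right this (by positivity)
      _ = ((n:ℝ) + 1) * r ^ n := by ring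
  have hf0 : ∀ n, 0 ≤ f n := fun n => by rw [hf]; positivity
  have hfsum : Summable f := Summable.of_nonneg_of_le hf0 hfle hgeo
  -- tail bound
  have hftail : Summable (fun n : ℕ => f (n + 1)) := (summable_nat_add_iff 1).2 hfsum
  have hgtail : Summable (fun n : ℕ => (1 - t^2) * ((((n:ℝ) + 1) + 1) * r ^ (n + 1))) := by
    apply Summable.mul_left
    have := (summable_nat_add_iff 1).2 hgeo
    convert this using 2 with n
    · rfl
    push_cast; ring_nf
  have htail_le : ∑' n : ℕ, f (n + 1)
      ≤ ∑' n : ℕ, (1 - t^2) * ((((n:ℝ) + 1) + 1) * r ^ (n + 1)) := by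
    apply Summable.tsum_le_tsum _ hftail hgtail
    intro n
    rw [hf]
    simp only
    have hcast : (((n + 1 : ℕ) : ℝ) + 1) = ((n:ℝ) + 1) + 1 := by push_cast; ring
    rw [hcast]
    have hs := hschur (n + 1) (by omega)
    calc (((n:ℝ) + 1 + 1) * ‖a (n + 1 + 1)‖) * r ^ (n + 1)
        ≤ (((n:ℝ) + 1 + 1) * (1 - t^2)) * r ^ (n + 1) := by
          apply mul_le_mul_of_nonneg_right _ (by positivity)
          exact mul_le_mul_of_nonneg_left hs (by positivity)
      _ = (1 - t^2) * ((((n:ℝ) + 1) + 1) * r ^ (n + 1)) := by ring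
  have hgtailval : ∑' n : ℕ, (1 - t^2) * ((((n:ℝ) + 1) + 1) * r ^ (n + 1))
      = (1 - t^2) * (((1 - r)^2)⁻¹ - 1) := by
    rw [tsum_mul_left]
    congr 1
    have hsplit := Summable.tsum_eq_zero_add hgeo
    rw [hC] at hsplit
    have : ∑' n : ℕ, ((((n:ℝ) + 1) + 1) * r ^ (n + 1))
        = ∑' n : ℕ, (((n + 1 : ℕ):ℝ) + 1) * r ^ (n + 1) := by
      apply tsum_congr; intro n; push_cast; ring
    rw [this]
    simp only [Nat.cast_zero, zero_add, pow_zero, mul_one] at hsplit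
    linarith [hsplit]
  -- assemble
  rw [hmaj, Summable.tsum_eq_zero_add hfsum]
  have hf0val : f 0 = t := by
    rw [hf]; simp [ht]
  rw [hf0val]
  have hC32 : ((1 - r)^2)⁻¹ ≤ 3/2 := by
    have h23 : (2/3 : ℝ) ≤ (1 - r)^2 := by
      have hss := Real.sq_sqrt (by norm_num : (0:ℝ) ≤ 2/3)
      nlinarith [hsq, Real.sqrt_nonneg (2/3 : ℝ)]
    rw [show (3/2 : ℝ) = ((2/3 : ℝ))⁻¹ by norm_num]
    exact inv_anti₀ (by norm_num) h23
  have hC1 : 1 ≤ ((1 - r)^2)⁻¹ := by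
    have h4 : (1 - r)^2 ≤ 1 := by nlinarith
    have h5 : 0 < (1 - r)^2 := by nlinarith
    have := inv_anti₀ h5 h4
    simpa using this
  have htail := le_trans htail_le (le_of_eq hgtailval)
  nlinarith [htail, hC32, hC1, ht0, ht1, sq_nonneg (1 - t), sq_nonneg t]
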